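/- For every s ≥ 1 there exists a polynomial P_s ∈ ℝ[X] of degree at most s such that, for every z ∈ (0,1), the function z ↦ P_s(z²)/(1−z²)^{3s/2} is differentiable at z with derivative −z^{−1}·(1−z²)^{1/2}·F̂_s(z). (That is, the Liouville–Green coefficients Ê_s(z) = ∫_z^∞ t^{−1}(1−t²)^{1/2} F̂_s(t) dt for Bessel's equation have the closed form P_s(z²)/(1−z²)^{3s/2}.) -/

import Mathlib

open Polynomial Real

open Polynomial

lemma solveP (s : ℕ) (hs : 1 ≤ s) (B : ℝ[X]) (hB : B.natDegree ≤ s) :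
    ∃ P : ℝ[X], P.natDegree ≤ s ∧ ∀ u : ℝ,
      3*(s:ℝ) * P.eval u + 2*(1-u) * (derivative P).eval u = B.eval u := by
  classical
  set D : ℝ[X] := B.comp (1 - X) with hD
  have hD1 : (1 - X : ℝ[X]).natDegree ≤ 1 :=
    le_trans (natDegree_sub_le _ _) (by simp)
  have hDdeg : D.natDegree ≤ s := by
    refine le_trans natDegree_comp_le ?_
    calc B.natDegree * (1 - X : ℝ[X]).natDegree ≤ s * 1 := Nat.mul_le_mul hB hD1
    _ = s := by ring
  have hcomp : D.comp (1 - X) = B := by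
    rw [hD, comp_assoc]; simp
  have hBeval : ∀ u : ℝ, B.eval u = ∑ k ∈ Finset.range (s+1), D.coeff k * (1-u)^k := by
    intro u
    conv_lhs => rw [← hcomp]
    rw [eval_comp]
    have := Polynomial.eval_eq_sum_range' (Nat.lt_succ_of_le hDdeg) (eval u (1 - X : ℝ[X]))
    simpa using this
  refine ⟨∑ k ∈ Finset.range (s+1), C (D.coeff k / (3*(s:ℝ) - 2*k)) * (1 - X)^k, ?_, ?_⟩
  · refine natDegree_sum_le_of_forall_le _ _ (fun k hk => ?_)
    refine le_trans (natDegree_mul_le) ?_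
    simp only [natDegree_C, zero_add]
    refine le_trans (natDegree_pow_le) ?_
    have : k ≤ s := Nat.lt_succ_iff.mp (Finset.mem_range.mp hk)
    calc k * (1 - X : ℝ[X]).natDegree ≤ s * 1 := Nat.mul_le_mul this hD1
    _ = s := by ring
  · intro u
    rw [hBeval u, derivative_sum, eval_finset_sum, eval_finset_sum,
      Finset.mul_sum, Finset.mul_sum, ← Finset.sum_add_distrib]
    refine Finset.sum_congr rfl (fun k hk => ?_)
    have hk' : k ≤ s := Nat.lt_succ_iff.mp (Finset.mem_range.mp hk)
    have hne : (3*(s:ℝ) - 2*k) ≠ 0 := by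
      have h1 : (k:ℝ) ≤ s := by exact_mod_cast hk'
      have h2 : (1:ℝ) ≤ s := by exact_mod_cast hs
      nlinarith
    rw [derivative_mul, derivative_C, zero_mul, zero_add, derivative_pow]
    have hder : derivative (1 - X : ℝ[X]) = -1 := by simp
    rw [hder]
    simp only [eval_mul, eval_C, eval_pow, eval_sub, eval_one, eval_X, eval_natCast, eval_neg]
    rcases Nat.eq_zero_or_pos k with hk0 | hk0
    · subst hk0
      simp only [Nat.cast_zero, pow_zero, mul_one, zero_mul, mul_zero, add_zero]
      field_simp
      ring
    · have hpow : (1-u) * (1-u)^(k-1) = (1-u)^k := by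
        rw [← pow_succ']
        congr 1
        omega
      have : 3*(s:ℝ) * (D.coeff k / (3*(s:ℝ) - 2*k) * (1-u)^k)
          + 2*(1-u) * (D.coeff k / (3*(s:ℝ) - 2*k) * ((k:ℝ) * (1-u)^(k-1) * (-1)))
          = (3*(s:ℝ) - 2*k) * (D.coeff k / (3*(s:ℝ) - 2*k)) * (1-u)^k := by
        rw [← hpow]; ring
      rw [this, mul_div_cancel₀ _ hne]


lemma formF (F : ℕ → ℝ → ℝ)
    (hF1 : ∀ z ∈ Set.Ioo (0:ℝ) 1, F 1 z = z^2 * (z^2 + 4) / (8 * (z^2 - 1)^3))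
    (hFrec : ∀ s, 1 ≤ s → ∀ z ∈ Set.Ioo (0:ℝ) 1,
      F (s+1) z = z / (2 * Real.sqrt (1 - z^2)) * deriv (F s) z
        - (1/2) * ∑ j ∈ Finset.Icc 1 (s-1), F j z * F (s-j) z) :
    ∀ s, 1 ≤ s → ∃ A : ℝ[X], A.natDegree ≤ s ∧ ∀ z ∈ Set.Ioo (0:ℝ) 1,
      F s z = z^2 * A.eval (z^2) * (1 - z^2) ^ (-(3*(s:ℝ)+3)/2) := by
  intro s
  induction s using Nat.strong_induction_on with
  | _ s IH =>
  intro hs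
  rcases s with _ | m
  · omega
  rcases Nat.eq_zero_or_pos m with rfl | hm
  · -- base case s = 1
    refine ⟨C (-(1:ℝ)/8) * (X + C 4), ?_, ?_⟩
    · refine le_trans natDegree_mul_le ?_
      simp [natDegree_X_add_C]
    · intro z hz
      obtain ⟨hz0, hz1⟩ := hz
      have ht : (0:ℝ) < 1 - z^2 := by nlinarith
      rw [hF1 z ⟨hz0, hz1⟩]
      have hexp : (1-z^2:ℝ) ^ (-(3*((0+1:ℕ):ℝ)+3)/2) = ((1-z^2)^(3:ℕ))⁻¹ := by
        rw [show (-(3*((0+1:ℕ):ℝ)+3)/2) = -((3:ℕ):ℝ) by norm_num, Real.rpow_neg ht.le,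
          Real.rpow_natCast]
      rw [hexp]
      have hne : (z^2 - 1 : ℝ) ≠ 0 := by nlinarith
      have hne2 : (1 - z^2 : ℝ) ≠ 0 := ht.ne'
      simp only [eval_mul, eval_add, eval_C, eval_X]
      field_simp
      ring
  · -- inductive step, s = m + 1 with 1 ≤ m
    have hm1 : 1 ≤ m := hm
    have hIH : ∀ j, 1 ≤ j → j ≤ m → ∃ A : ℝ[X], A.natDegree ≤ j ∧
        ∀ z ∈ Set.Ioo (0:ℝ) 1,
          F j z = z^2 * A.eval (z^2) * (1 - z^2) ^ (-(3*(j:ℝ)+3)/2) :=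
      fun j h1 h2 => IH j (by omega) h1
    choose! G hGdeg hGform using hIH
    have hAdeg : (G m).natDegree ≤ m := hGdeg m hm1 le_rfl
    refine ⟨(G m + X * derivative (G m)) * (1 - X) + C ((3*(m:ℝ)+3)/2) * (X * G m)
      - C (1/2) * ∑ j ∈ Finset.Icc 1 (m-1), X * (G j * G (m - j)), ?_, ?_⟩
    · -- degree bound
      have h1X : (1 - X : ℝ[X]).natDegree ≤ 1 := le_trans (natDegree_sub_le _ _) (by simp)
      have hXA' : (X * derivative (G m)).natDegree ≤ m := by
        refine le_trans natDegree_mul_le ?_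
        have := natDegree_derivative_le (G m)
        simp only [natDegree_X]
        omega
      have t1 : ((G m + X * derivative (G m)) * (1 - X)).natDegree ≤ m + 1 := by
        refine le_trans natDegree_mul_le ?_
        have := le_trans (natDegree_add_le (G m) (X * derivative (G m))) (max_le hAdeg hXA')
        omega
      have t2 : (C ((3*(m:ℝ)+3)/2) * (X * G m)).natDegree ≤ m + 1 := by
        refine le_trans natDegree_mul_le ?_
        have : (X * G m).natDegree ≤ 1 + m := le_trans natDegree_mul_le (by simp only [natDegree_X]; omega)
        simp only [natDegree_C]
        omega
      have t3 : (C (1/2 : ℝ) * ∑ j ∈ Finset.Icc 1 (m-1), X * (G j * G (m - j))).natDegree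
          ≤ m + 1 := by
        refine le_trans natDegree_mul_le ?_
        simp only [natDegree_C, zero_add]
        refine natDegree_sum_le_of_forall_le _ _ (fun j hj => ?_)
        obtain ⟨hj1, hj2⟩ := Finset.mem_Icc.mp hj
        have hjm : j ≤ m := by omega
        have d1 := hGdeg j hj1 hjm
        have d2 := hGdeg (m - j) (by omega) (by omega)
        refine le_trans natDegree_mul_le ?_
        have : (G j * G (m - j)).natDegree ≤ j + (m - j) := le_trans natDegree_mul_le (by omega)
        simp only [natDegree_X]
        omega
      refine le_trans (natDegree_sub_le _ _) ?_
      refine max_le (le_trans (natDegree_add_le _ _) (max_le t1 t2)) t3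
    · -- pointwise identity
      intro z hz
      obtain ⟨hz0, hz1⟩ := hz
      have ht : (0:ℝ) < 1 - z^2 := by nlinarith
      have hu : ((1-z^2:ℝ) ^ ((1:ℝ)/2)) ≠ 0 := (Real.rpow_pos_of_pos ht _).ne'
      rw [hFrec m hm1 z ⟨hz0, hz1⟩]
      -- derivative of F m
      have h1 : HasDerivAt (fun w:ℝ => w^2) (2*z) z := by simpa using hasDerivAt_pow 2 z
      have h2 : HasDerivAt (fun w:ℝ => (G m).eval (w^2))
          ((derivative (G m)).eval (z^2) * (2*z)) z := by
        exact ((G m).hasDerivAt (z^2)).comp z h1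
      have h4 : HasDerivAt (fun w:ℝ => 1 - w^2) (-(2*z)) z := by
        exact h1.const_sub 1
      have h5 : HasDerivAt (fun w:ℝ => (1-w^2) ^ (-(3*(m:ℝ)+3)/2))
          (-(2*z) * (-(3*(m:ℝ)+3)/2) * (1-z^2) ^ (-(3*(m:ℝ)+3)/2 - 1)) z :=
        h4.rpow_const (Or.inl ht.ne')
      have hg := (h1.mul h2).mul h5
      have hFeq : F m =ᶠ[nhds z]
          (fun w => w^2 * (G m).eval (w^2) * (1-w^2) ^ (-(3*(m:ℝ)+3)/2)) := by
        filter_upwards [isOpen_Ioo.mem_nhds (show z ∈ Set.Ioo (0:ℝ) 1 from ⟨hz0, hz1⟩)] with x hx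
        exact hGform m hm1 le_rfl x hx
      have hder : deriv (F m) z
          = (2*z * (G m).eval (z^2) + z^2 * ((derivative (G m)).eval (z^2) * (2*z)))
              * (1-z^2) ^ (-(3*(m:ℝ)+3)/2)
            + z^2 * (G m).eval (z^2)
              * (-(2*z) * (-(3*(m:ℝ)+3)/2) * (1-z^2) ^ (-(3*(m:ℝ)+3)/2 - 1)) := by
        rw [hFeq.deriv_eq]
        exact hg.deriv
      rw [hder]
      -- rewrite the sum
      have hsum : ∀ j ∈ Finset.Icc 1 (m-1), F j z * F (m-j) z
          = (z^4 * ((1-z^2) ^ (-(3*((m+1:ℕ):ℝ)+3)/2)))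
              * ((G j).eval (z^2) * (G (m-j)).eval (z^2)) := by
        intro j hj
        obtain ⟨hj1, hj2⟩ := Finset.mem_Icc.mp hj
        have hjm : j ≤ m := by omega
        rw [hGform j hj1 hjm z ⟨hz0, hz1⟩,
          hGform (m-j) (by omega) (by omega) z ⟨hz0, hz1⟩]
        have hexp : (-(3*(j:ℝ)+3)/2) + (-(3*((m-j:ℕ):ℝ)+3)/2) = (-(3*((m+1:ℕ):ℝ)+3)/2) := by
          rw [Nat.cast_sub hjm]
          push_cast
          ring
        rw [← hexp, Real.rpow_add ht]
        ring
      rw [Finset.sum_congr rfl hsum, ← Finset.mul_sum]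
      -- rewrite rpow exponents
      have e1 : (1-z^2:ℝ) ^ (-(3*(m:ℝ)+3)/2)
          = (1-z^2) * ((1-z^2) ^ ((1:ℝ)/2)) * ((1-z^2) ^ (-(3*((m+1:ℕ):ℝ)+3)/2)) := by
        rw [show (-(3*(m:ℝ)+3)/2) = (1 + (1:ℝ)/2) + (-(3*((m+1:ℕ):ℝ)+3)/2) by push_cast; ring,
          Real.rpow_add ht, Real.rpow_add ht, Real.rpow_one]
      have e2 : (1-z^2:ℝ) ^ (-(3*(m:ℝ)+3)/2 - 1)
          = ((1-z^2) ^ ((1:ℝ)/2)) * ((1-z^2) ^ (-(3*((m+1:ℕ):ℝ)+3)/2)) := by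
        rw [show (-(3*(m:ℝ)+3)/2 - 1) = ((1:ℝ)/2) + (-(3*((m+1:ℕ):ℝ)+3)/2) by push_cast; ring,
          Real.rpow_add ht]
      rw [Real.sqrt_eq_rpow, e1, e2]
      -- expand polynomial evaluation on the RHS
      simp only [eval_add, eval_sub, eval_mul, eval_one, eval_X, eval_C, eval_finset_sum]
      rw [← Finset.mul_sum]
      field_simp [hu]

/-- For the Liouville–Green coefficient functions `F s` of
Bessel's equation on `(0,1)`, for every `s ≥ 1` there exists a polynomial
`P` of degree at most `s` such that `z ↦ P(z²)/(1-z²)^{3s/2}` has derivative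
`-z⁻¹·√(1-z²)·F s z` at each `z ∈ (0,1)`; i.e. the coefficients
`Ê_s(z) = ∫_z^∞ t⁻¹(1-t²)^{1/2} F̂_s(t) dt` have this closed form. -/

theorem stmt5
    (F : ℕ → ℝ → ℝ)
    (hF1 : ∀ z ∈ Set.Ioo (0:ℝ) 1, F 1 z = z^2 * (z^2 + 4) / (8 * (z^2 - 1)^3))
    (hFrec : ∀ s, 1 ≤ s → ∀ z ∈ Set.Ioo (0:ℝ) 1,
      F (s+1) z = z / (2 * Real.sqrt (1 - z^2)) * deriv (F s) z
        - (1/2) * ∑ j ∈ Finset.Icc 1 (s-1), F j z * F (s-j) z) :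
    ∀ s, 1 ≤ s → ∃ P : Polynomial ℝ, P.natDegree ≤ s ∧
      ∀ z ∈ Set.Ioo (0:ℝ) 1,
        HasDerivAt (fun z : ℝ => P.eval (z^2) / (1 - z^2) ^ ((3 * (s:ℝ)) / 2))
          (-(z⁻¹ * Real.sqrt (1 - z^2) * F s z)) z := by
  intro s hs
  obtain ⟨A, hAdeg, hAform⟩ := formF F hF1 hFrec s hs
  obtain ⟨P, hPdeg, hPid⟩ := solveP s hs (-A) (by simpa using hAdeg)
  refine ⟨P, hPdeg, ?_⟩
  intro z hz
  obtain ⟨hz0, hz1⟩ := hz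
  have ht : (0:ℝ) < 1 - z^2 := by nlinarith
  have h1 : HasDerivAt (fun w:ℝ => w^2) (2*z) z := by simpa using hasDerivAt_pow 2 z
  have hnum : HasDerivAt (fun w:ℝ => P.eval (w^2)) ((derivative P).eval (z^2) * (2*z)) z := by
    exact (P.hasDerivAt (z^2)).comp z h1
  have h4 : HasDerivAt (fun w:ℝ => 1 - w^2) (-(2*z)) z := by
    exact h1.const_sub 1
  have hden : HasDerivAt (fun w:ℝ => (1-w^2) ^ ((3*(s:ℝ))/2))
      (-(2*z) * ((3*(s:ℝ))/2) * (1-z^2) ^ ((3*(s:ℝ))/2 - 1)) z :=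
    h4.rpow_const (Or.inl ht.ne')
  have hdne : (1-z^2:ℝ) ^ ((3*(s:ℝ))/2) ≠ 0 := (Real.rpow_pos_of_pos ht _).ne'
  have hdiv : HasDerivAt (fun w:ℝ => P.eval (w^2) / (1-w^2) ^ ((3*(s:ℝ))/2))
      (((derivative P).eval (z^2) * (2*z) * ((1-z^2) ^ ((3*(s:ℝ))/2))
        - P.eval (z^2) * (-(2*z) * ((3*(s:ℝ))/2) * (1-z^2) ^ ((3*(s:ℝ))/2 - 1)))
        / ((1-z^2) ^ ((3*(s:ℝ))/2))^2) z := hnum.div hden hdne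
  convert hdiv using 1
  -- value equality
  rw [hAform z ⟨hz0, hz1⟩]
  have key : A.eval (z^2)
      = -(3*(s:ℝ)*P.eval (z^2) + 2*(1-z^2)*(derivative P).eval (z^2)) := by
    have := hPid (z^2)
    rw [eval_neg] at this
    linarith
  have hpne : (1-z^2:ℝ) ^ ((3*(s:ℝ))/2 - 1) ≠ 0 := (Real.rpow_pos_of_pos ht _).ne'
  have ec : (1-z^2:ℝ) ^ ((3*(s:ℝ))/2) = (1-z^2) * (1-z^2) ^ ((3*(s:ℝ))/2 - 1) := by
    conv_lhs => rw [show (3*(s:ℝ))/2 = 1 + ((3*(s:ℝ))/2 - 1) by ring]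
    rw [Real.rpow_add ht, Real.rpow_one]
  have em : Real.sqrt (1-z^2) * (1-z^2) ^ (-(3*(s:ℝ)+3)/2)
      = ((1-z^2) * (1-z^2) * ((1-z^2) ^ ((3*(s:ℝ))/2 - 1)))⁻¹ := by
    rw [Real.sqrt_eq_rpow, ← Real.rpow_add ht,
      show ((1:ℝ)/2 + -(3*(s:ℝ)+3)/2) = -(1 + (1 + ((3*(s:ℝ))/2 - 1))) by ring,
      Real.rpow_neg ht.le, Real.rpow_add ht, Real.rpow_add ht, Real.rpow_one]
    ring_nf
  have step1 : z⁻¹ * Real.sqrt (1-z^2)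
        * (z^2 * A.eval (z^2) * (1-z^2) ^ (-(3*(s:ℝ)+3)/2))
      = z * A.eval (z^2) * (Real.sqrt (1-z^2) * (1-z^2) ^ (-(3*(s:ℝ)+3)/2)) := by
    field_simp
  rw [step1, em, key, ec]
  field_simp
  ring
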